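/- Suppose A is positive definite, B and X are positive semidefinite, the block matrix [[A, X], [X, B]] is positive semidefinite, and Π is a projection commuting with X. Then A^{1/2}(A^{-1/2} Π B Π A^{-1/2})^{1/2} A^{1/2} ≥ Π X Π in the Loewner order. -/

import Mathlib

open Matrix Kronecker
open scoped ComplexOrder

noncomputable section
attribute [local instance] Classical.propDecidable

/-- Moore–Penrose pseudoinverse of a square complex matrix. -/
def pinv {n : Type*} [Fintype n] [DecidableEq n] (A : Matrix n n ℂ) : Matrix n n ℂ :=
  if h : ∃ B : Matrix n n ℂ,
      A * B * A = A ∧ B * A * B = B ∧ (A * B)ᴴ = A * B ∧ (B * A)ᴴ = B * A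
  then h.choose else 0

/-- Positive semidefinite square root (junk value `0` if the matrix is not PSD). -/
def msqrt {n : Type*} [Fintype n] [DecidableEq n] (A : Matrix n n ℂ) : Matrix n n ℂ :=
  if h : A.PosSemidef then
    (h.1.eigenvectorUnitary : Matrix n n ℂ) * diagonal ((↑) ∘ (h.1.eigenvalues · |>.sqrt)) *
      (star h.1.eigenvectorUnitary : Matrix n n ℂ)
  else 0

/-- `sgn(X) = U sgn(Σ) V*` for an SVD `X = U Σ V*`; equivalently `X (X* X)^{-1/2}`
with the Moore–Penrose pseudoinverse. -/
def msgn {n : Type*} [Fintype n] [DecidableEq n] (X : Matrix n n ℂ) : Matrix n n ℂ :=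
  X * pinv (msqrt (Xᴴ * X))

/-- Matrix geometric mean `A # B = A^{1/2} (A^{-1/2} B A^{-1/2})^{1/2} A^{1/2}`
(with Moore–Penrose pseudoinverses). -/
def geo {n : Type*} [Fintype n] [DecidableEq n] (A B : Matrix n n ℂ) : Matrix n n ℂ :=
  msqrt A * msqrt (pinv (msqrt A) * B * pinv (msqrt A)) * msqrt A

/-- The unnormalized maximally entangled state `|Ω⟩ = ∑ i, |i⟩ ⊗ |i⟩`. -/
def omegaVec (d : ℕ) : Fin d × Fin d → ℂ := fun p => if p.1 = p.2 then 1 else 0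

/-- Reduced density matrix of `|C⟩⟨C|` on the first subsystem
(partial trace over the second subsystem). -/
def reducedA {d : ℕ} (C : Fin d × Fin d → ℂ) : Matrix (Fin d) (Fin d) ℂ :=
  Matrix.of fun i j => ∑ k, C (i, k) * star (C (j, k))

/-- Partial trace over the first subsystem of the operator `|D⟩⟨C|`. -/
def trA {d : ℕ} (D C : Fin d × Fin d → ℂ) : Matrix (Fin d) (Fin d) ℂ :=
  Matrix.of fun j l => ∑ i, D (i, j) * star (C (i, l))

/-- `ℓ²→ℓ²` operator norm (largest singular value). -/
def opNorm {n : Type*} [Fintype n] [DecidableEq n] (A : Matrix n n ℂ) : ℝ :=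
  ‖(Matrix.toEuclideanCLM (𝕜 := ℂ) A : EuclideanSpace ℂ n →L[ℂ] EuclideanSpace ℂ n)‖

/-- `P` is the orthogonal projection onto the image (column space) of `A`. -/
def IsOrthProjOnto {n : Type*} [Fintype n] [DecidableEq n] (P A : Matrix n n ℂ) : Prop :=
  Pᴴ = P ∧ P * P = P ∧ LinearMap.range P.mulVecLin = LinearMap.range A.mulVecLin

/-- `η` is the smallest nonzero eigenvalue of the Hermitian matrix `M`. -/
def IsSmallestNonzeroEigenvalue {n : Type*} [Fintype n] [DecidableEq n]
    (M : Matrix n n ℂ) (η : ℝ) : Prop :=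
  ∃ hM : M.IsHermitian, η ≠ 0 ∧ (∃ i, hM.eigenvalues i = η) ∧
    ∀ i, hM.eigenvalues i ≠ 0 → η ≤ hM.eigenvalues i

open scoped MatrixOrder in
lemma msqrt_eq_cfc {n : Type*} [Fintype n] [DecidableEq n] {A : Matrix n n ℂ}
    (h : A.PosSemidef) : msqrt A = CFC.sqrt A := by
  rw [CFC.sqrt_eq_real_sqrt A h.nonneg, cfcₙ_eq_cfc, h.1.cfc_eq, msqrt, dif_pos h]
  rfl

def Matrix.PosSemidef.sqrt {n : Type*} [Fintype n] [DecidableEq n] {A : Matrix n n ℂ}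
    (_h : A.PosSemidef) : Matrix n n ℂ := msqrt A

open scoped MatrixOrder in
lemma Matrix.PosSemidef.posSemidef_sqrt {n : Type*} [Fintype n] [DecidableEq n]
    {A : Matrix n n ℂ} (h : A.PosSemidef) : h.sqrt.PosSemidef := by
  rw [Matrix.PosSemidef.sqrt, msqrt_eq_cfc h]
  exact (CFC.sqrt_nonneg A).posSemidef

open scoped MatrixOrder in
lemma Matrix.PosSemidef.sqrt_mul_self {n : Type*} [Fintype n] [DecidableEq n]
    {A : Matrix n n ℂ} (h : A.PosSemidef) : h.sqrt * h.sqrt = A := by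
  rw [Matrix.PosSemidef.sqrt, msqrt_eq_cfc h]
  exact CFC.sqrt_mul_sqrt_self A h.nonneg

open scoped MatrixOrder in
lemma Matrix.PosSemidef.sqrt_sq {n : Type*} [Fintype n] [DecidableEq n]
    {A : Matrix n n ℂ} (h : A.PosSemidef) : (h.pow 2).sqrt = A := by
  rw [Matrix.PosSemidef.sqrt, msqrt_eq_cfc (h.pow 2)]
  exact CFC.sqrt_sq A h.nonneg

lemma my_sqrt_mono {n : Type*} [Fintype n] [DecidableEq n] {a b : Matrix n n ℂ}
    (ha : a.PosSemidef) (hb : b.PosSemidef) (hab : (b - a).PosSemidef) :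
    (hb.sqrt - ha.sqrt).PosSemidef := by
  set T := ha.sqrt with hTdef
  set S := hb.sqrt with hSdef
  have hTps : T.PosSemidef := ha.posSemidef_sqrt
  have hSps : S.PosSemidef := hb.posSemidef_sqrt
  have hSS : S * S = b := hb.sqrt_mul_self
  have hTT : T * T = a := ha.sqrt_mul_self
  have hMH : (S - T).IsHermitian := hSps.1.sub hTps.1
  refine hMH.posSemidef_iff_eigenvalues_nonneg.mpr fun i => ?_
  by_contra hneg
  push_neg at hneg
  set lam := hMH.eigenvalues i with hlam
  set v : n → ℂ := ⇑(hMH.eigenvectorBasis i) with hv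
  have hvne : v ≠ 0 := by
    intro h
    exact hMH.eigenvectorBasis.orthonormal.ne_zero i (by ext j; exact congrFun h j)
  have hev : (S - T) *ᵥ v = (lam : ℂ) • v := by
    have h0 := hMH.mulVec_eigenvectorBasis i
    rw [show (S - T) *ᵥ v = lam • v from h0]
    funext j
    simp [Complex.real_smul]
  set c1 := star v ⬝ᵥ S *ᵥ v with hc1
  set c2 := star v ⬝ᵥ T *ᵥ v with hc2
  have hc1nn : 0 ≤ c1 := hSps.dotProduct_mulVec_nonneg v
  have hc2nn : 0 ≤ c2 := hTps.dotProduct_mulVec_nonneg v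
  have hkey : star v ⬝ᵥ (b - a) *ᵥ v = (lam : ℂ) * (c1 + c2) := by
    have hba : b - a = S * (S - T) + (S - T) * T := by
      rw [mul_sub, sub_mul, hSS, hTT]; abel
    have h2 : star v ⬝ᵥ ((S - T) * T) *ᵥ v = (lam : ℂ) * c2 := by
      rw [← mulVec_mulVec, dotProduct_mulVec]
      have hst : star v ᵥ* (S - T) = star ((S - T) *ᵥ v) := by
        rw [star_mulVec, hMH.eq]
      rw [hst, hev, star_smul, smul_dotProduct]
      simp [hc2, Complex.conj_ofReal, smul_eq_mul]
    have h1 : star v ⬝ᵥ (S * (S - T)) *ᵥ v = (lam : ℂ) * c1 := by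
      rw [← mulVec_mulVec, hev, mulVec_smul, dotProduct_smul, smul_eq_mul, hc1]
    rw [hba, add_mulVec, dotProduct_add, h1, h2]
    ring
  have hnn : 0 ≤ (lam : ℂ) * (c1 + c2) := hkey ▸ hab.dotProduct_mulVec_nonneg v
  have hle : (lam : ℂ) * (c1 + c2) ≤ 0 :=
    mul_nonpos_of_nonpos_of_nonneg (by exact_mod_cast hneg.le) (add_nonneg hc1nn hc2nn)
  have heq : (lam : ℂ) * (c1 + c2) = 0 := le_antisymm hle hnn
  have hlamne : (lam : ℂ) ≠ 0 := by exact_mod_cast hneg.ne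
  have hsum : c1 + c2 = 0 := by
    rcases mul_eq_zero.mp heq with h | h
    · exact absurd h hlamne
    · exact h
  obtain ⟨hc10, hc20⟩ := (add_eq_zero_iff_of_nonneg hc1nn hc2nn).mp hsum
  have hSv : S *ᵥ v = 0 := (hSps.dotProduct_mulVec_zero_iff v).mp hc10
  have hTv : T *ᵥ v = 0 := (hTps.dotProduct_mulVec_zero_iff v).mp hc20
  have hz : (lam : ℂ) • v = 0 := by
    rw [← hev, sub_mulVec, hSv, hTv, sub_zero]
  rcases smul_eq_zero.mp hz with h | h
  · exact hlamne h
  · exact hvne h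

lemma msqrt_eq {n : Type*} [Fintype n] [DecidableEq n] {A : Matrix n n ℂ}
    (hA : A.PosSemidef) : msqrt A = hA.sqrt := by
  rfl

lemma pinv_of_isUnit_det {n : Type*} [Fintype n] [DecidableEq n] {A : Matrix n n ℂ}
    (hA : IsUnit A.det) : pinv A = A⁻¹ := by
  have hex : ∃ B : Matrix n n ℂ,
      A * B * A = A ∧ B * A * B = B ∧ (A * B)ᴴ = A * B ∧ (B * A)ᴴ = B * A :=
    ⟨A⁻¹, by rw [Matrix.mul_nonsing_inv _ hA, one_mul],
      by rw [Matrix.nonsing_inv_mul _ hA, Matrix.one_mul],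
      by rw [Matrix.mul_nonsing_inv _ hA, conjTranspose_one],
      by rw [Matrix.nonsing_inv_mul _ hA, conjTranspose_one]⟩
  rw [pinv, dif_pos hex]
  obtain ⟨h1, -, -, -⟩ := hex.choose_spec
  calc hex.choose = A⁻¹ * (A * hex.choose * A) * A⁻¹ := by
        simp only [Matrix.mul_assoc]
        rw [Matrix.mul_nonsing_inv _ hA, Matrix.mul_one, ← Matrix.mul_assoc,
          Matrix.nonsing_inv_mul _ hA, Matrix.one_mul]
    _ = A⁻¹ * A * A⁻¹ := by rw [h1]
    _ = A⁻¹ := by rw [Matrix.nonsing_inv_mul _ hA, Matrix.one_mul]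

theorem schur_projection_bound {n : Type*} [Fintype n] [DecidableEq n]
    (A B X p : Matrix n n ℂ) (hA : A.PosDef) (hB : B.PosSemidef)
    (hX : X.PosSemidef)
    (hM : (Matrix.fromBlocks A X X B).PosSemidef)
    (hp1 : pᴴ = p) (hp2 : p * p = p) (hcomm : p * X = X * p) :
    (msqrt A * msqrt (pinv (msqrt A) * (p * B * p) * pinv (msqrt A)) * msqrt A
      - p * X * p).PosSemidef := by
  have hAps := hA.posSemidef
  set S := hAps.sqrt with hSdef
  have hSps : S.PosSemidef := hAps.posSemidef_sqrt
  have hSH : Sᴴ = S := hSps.1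
  have hSS : S * S = A := hAps.sqrt_mul_self
  have hAdet : IsUnit A.det := A.isUnit_iff_isUnit_det.mp hA.isUnit
  have hSdet : IsUnit S.det := by
    exact isUnit_of_mul_isUnit_left (by rw [← det_mul, hSS]; exact hAdet)
  have hmsA : msqrt A = S := msqrt_eq hAps
  have hpinvS : pinv S = S⁻¹ := pinv_of_isUnit_det hSdet
  have hRH : (S⁻¹)ᴴ = S⁻¹ := by rw [conjTranspose_nonsing_inv, hSH]
  have hSR : S * S⁻¹ = 1 := Matrix.mul_nonsing_inv _ hSdet
  have hRS : S⁻¹ * S = 1 := Matrix.nonsing_inv_mul _ hSdet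
  have hAinv : A⁻¹ = S⁻¹ * S⁻¹ := by rw [← hSS, Matrix.mul_inv_rev]
  have hXH : Xᴴ = X := hX.1
  haveI : Invertible A := hA.isUnit.invertible
  have hSchur : (B - X * A⁻¹ * X).PosSemidef := by
    have h := (Matrix.PosDef.fromBlocks₁₁ X B hA).mp (by rw [hXH]; exact hM)
    rwa [hXH] at h
  -- properties of p X p
  have hpXp : p * X * p = p * X := by
    rw [Matrix.mul_assoc, ← hcomm, ← Matrix.mul_assoc, hp2]
  have hXpp : p * X * p = X * p := by rw [hpXp, hcomm]
  have hY : (p * X * p).PosSemidef := by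
    have h := hX.mul_mul_conjTranspose_same p
    rwa [hp1] at h
  -- congruence with p
  have h1 : (p * (B - X * A⁻¹ * X) * p).PosSemidef := by
    have h := hSchur.mul_mul_conjTranspose_same p
    rwa [hp1] at h
  have hmid : (p * X * p) * A⁻¹ * (p * X * p) = p * (X * A⁻¹ * X) * p := by
    nth_rewrite 1 [hpXp]
    nth_rewrite 1 [hXpp]
    simp only [Matrix.mul_assoc]
  have h2 : (p * B * p - (p * X * p) * A⁻¹ * (p * X * p)).PosSemidef := by
    rw [mul_sub, sub_mul] at h1
    rwa [hmid]
  -- congruence with S⁻¹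
  have hpBp : (p * B * p).PosSemidef := by
    have h := hB.mul_mul_conjTranspose_same p
    rwa [hp1] at h
  have hC : (S⁻¹ * (p * B * p) * S⁻¹).PosSemidef := by
    have h := hpBp.mul_mul_conjTranspose_same S⁻¹
    rwa [hRH] at h
  have hD : (S⁻¹ * (p * X * p) * S⁻¹).PosSemidef := by
    have h := hY.mul_mul_conjTranspose_same S⁻¹
    rwa [hRH] at h
  have hDD : S⁻¹ * ((p * X * p) * A⁻¹ * (p * X * p)) * S⁻¹
      = (S⁻¹ * (p * X * p) * S⁻¹) * (S⁻¹ * (p * X * p) * S⁻¹) := by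
    rw [hAinv]; simp only [Matrix.mul_assoc]
  have h3 : (S⁻¹ * (p * B * p) * S⁻¹
      - (S⁻¹ * (p * X * p) * S⁻¹) ^ 2).PosSemidef := by
    have h := h2.mul_mul_conjTranspose_same S⁻¹
    rw [hRH, mul_sub, sub_mul, hDD, ← pow_two] at h
    exact h
  have hD2 : ((S⁻¹ * (p * X * p) * S⁻¹) ^ 2).PosSemidef := hD.pow 2
  have hmono := my_sqrt_mono hD2 hC h3
  have hD2s : hD2.sqrt = S⁻¹ * (p * X * p) * S⁻¹ := hD.sqrt_sq
  rw [hD2s] at hmono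
  have h4 := hmono.mul_mul_conjTranspose_same S
  rw [hSH] at h4
  have hSDS : S * (S⁻¹ * (p * X * p) * S⁻¹) * S = p * X * p := by
    rw [show S * (S⁻¹ * (p * X * p) * S⁻¹) * S
        = (S * S⁻¹) * (p * X * p) * (S⁻¹ * S) from by simp only [Matrix.mul_assoc],
      hSR, hRS, Matrix.one_mul, Matrix.mul_one]
  rw [mul_sub, sub_mul, hSDS] at h4
  rw [hmsA, hpinvS, msqrt_eq hC]
  exact h4
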